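/- arXiv:2603.00658 — 2 statements merged into one kernel-verified Lean document; each statement's English description precedes it below -/
import Mathlib

section
/- A real number x ∈ [0,1] belongs to P_F if and only if x admits a hexadecimal expansion x = Σ_{n≥1} c_n · 16^(-n) with c_n ∈ {a_n, b_n} for every n ≥ 1, where a_n = p_n mod 16 and b_n = (a_n + 8) mod 16. -/
open MeasureTheory Set Filter

/-- `pr n` is the `n`-th prime, `pr 1 = 2`, `pr 2 = 3`, ... -/
noncomputable def pr (n : ℕ) : ℕ := Nat.nth Nat.Prime (n - 1)

/-- `pa n = p_n mod 16`. -/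
noncomputable def pa (n : ℕ) : ℕ := pr n % 16

/-- `pb n = (pa n + 8) mod 16`. -/
noncomputable def pb (n : ℕ) : ℕ := (pa n + 8) % 16

/-- The left endpoint of the basic interval coded by the digit word `σ`. -/
noncomputable def lEnd {n : ℕ} (σ : Fin n → ℕ) : ℝ :=
  ∑ i : Fin n, (σ i : ℝ) / 16 ^ (i.1 + 1)

/-- The `n`-th stage of the prime fractal construction: the union of the basic
intervals of level `n`, coded by words whose `i`-th digit is `pa (i+1)` or `pb (i+1)`. -/
noncomputable def F (n : ℕ) : Set ℝ :=
  ⋃ σ ∈ {σ : Fin n → ℕ | ∀ i : Fin n, σ i = pa (i.1 + 1) ∨ σ i = pb (i.1 + 1)},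
    Set.Icc (lEnd σ) (lEnd σ + (16 : ℝ) ^ (-(n : ℤ)))

/-- The prime fractal set. -/
noncomputable def PF : Set ℝ := ⋂ n, F n

open Topology

lemma pa_lt (n : ℕ) : pa n < 16 := Nat.mod_lt _ (by norm_num)
lemma pb_lt (n : ℕ) : pb n < 16 := Nat.mod_lt _ (by norm_num)
lemma gap (n : ℕ) : pa n + 8 = pb n ∨ pb n + 8 = pa n := by
  have h := pa_lt n; unfold pb; omega

noncomputable def pS (c : ℕ → ℕ) (n : ℕ) : ℝ :=
  ∑ j ∈ Finset.range n, (c j : ℝ) / 16 ^ (j + 1)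

lemma sum_Ico_le (c : ℕ → ℕ) (a b : ℕ) (hab : a ≤ b)
    (hc : ∀ j, a ≤ j → j < b → c j ≤ 15) :
    ∑ j ∈ Finset.Ico a b, (c j : ℝ) / 16 ^ (j + 1) ≤ 1 / 16 ^ a - 1 / 16 ^ b := by
  induction b, hab using Nat.le_induction with
  | base => simp
  | succ b hb ih =>
    rw [Finset.sum_Ico_succ_top hb]
    have h1 := ih (fun j hj hj' => hc j hj (by omega))
    have h2 : (c b : ℝ) ≤ 15 := by exact_mod_cast hc b hb (by omega)
    have h3 : (c b : ℝ) / 16 ^ (b + 1) ≤ 15 / 16 ^ (b + 1) := by gcongr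
    have h4 : (15 : ℝ) / 16 ^ (b + 1) = 1 / 16 ^ b - 1 / 16 ^ (b + 1) := by
      rw [pow_succ]; field_simp; ring
    linarith

lemma pS_mono (c : ℕ → ℕ) {m n : ℕ} (h : m ≤ n) : pS c m ≤ pS c n :=
  Finset.sum_le_sum_of_subset_of_nonneg (Finset.range_subset_range.2 h)
    (fun j _ _ => by positivity)

lemma pS_split (c : ℕ → ℕ) {m n : ℕ} (h : m ≤ n) :
    pS c n = pS c m + ∑ j ∈ Finset.Ico m n, (c j : ℝ) / 16 ^ (j + 1) := by
  unfold pS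
  rw [Finset.range_eq_Ico, Finset.range_eq_Ico]
  exact (Finset.sum_Ico_consecutive (fun j => (c j : ℝ) / 16 ^ (j + 1)) (Nat.zero_le m) h).symm

lemma keyAux (n : ℕ) (c d : ℕ → ℕ) (x : ℝ)
    (hd15 : ∀ j, j < n → d j ≤ 15)
    (hx1 : pS c n ≤ x) (hx2 : x ≤ pS d n + 1 / 16 ^ n)
    (i : ℕ) (hi : i < n) (hgap : d i + 8 = c i)
    (hagree : ∀ j, j < i → c j = d j) : False := by
  have hin : i + 1 ≤ n := hi
  have heqi : pS c i = pS d i :=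
    Finset.sum_congr rfl (fun j hj => by rw [hagree j (Finset.mem_range.1 hj)])
  have hc1 : pS c (i + 1) ≤ pS c n := pS_mono c hin
  have hsplit : pS c (i + 1) = pS c i + (c i : ℝ) / 16 ^ (i + 1) := by
    unfold pS; rw [Finset.sum_range_succ]
  have hsplitd : pS d (i + 1) = pS d i + (d i : ℝ) / 16 ^ (i + 1) := by
    unfold pS; rw [Finset.sum_range_succ]
  have htail : pS d n ≤ pS d (i + 1) + (1 / 16 ^ (i + 1) - 1 / 16 ^ n) := by
    rw [pS_split d hin]
    have := sum_Ico_le d (i + 1) n hin (fun j _ hj' => hd15 j hj')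
    linarith
  have hci : (c i : ℝ) = (d i : ℝ) + 8 := by exact_mod_cast hgap.symm
  have e1 : (c i : ℝ) / 16 ^ (i + 1) = (d i : ℝ) / 16 ^ (i + 1) + 8 * (1 / 16 ^ (i + 1)) := by
    rw [hci]; ring
  have hpos : (0 : ℝ) < 1 / 16 ^ (i + 1) := by positivity
  linarith

lemma key (n : ℕ) (c d : ℕ → ℕ) (x : ℝ)
    (hc : ∀ j, j < n → c j = pa (j + 1) ∨ c j = pb (j + 1))
    (hd : ∀ j, j < n → d j = pa (j + 1) ∨ d j = pb (j + 1))
    (hxc1 : pS c n ≤ x) (hxc2 : x ≤ pS c n + 1 / 16 ^ n)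
    (hxd1 : pS d n ≤ x) (hxd2 : x ≤ pS d n + 1 / 16 ^ n) :
    ∀ j, j < n → c j = d j := by
  classical
  by_contra h
  push_neg at h
  obtain ⟨j0, hj0, hne0⟩ := h
  have hex : ∃ j, j < n ∧ c j ≠ d j := ⟨j0, hj0, hne0⟩
  obtain ⟨hi, hne⟩ := Nat.find_spec hex
  set i := Nat.find hex with hidef
  have hagree : ∀ j, j < i → c j = d j := by
    intro j hj
    by_contra h'
    exact Nat.find_min hex hj ⟨by omega, h'⟩
  have hd15 : ∀ (m : ℕ → ℕ), (∀ j, j < n → m j = pa (j+1) ∨ m j = pb (j+1)) → ∀ j, j < n → m j ≤ 15 := by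
    intro m hm j hj
    have := pa_lt (j + 1); have := pb_lt (j + 1)
    rcases hm j hj with h | h <;> omega
  have hg : d i + 8 = c i ∨ c i + 8 = d i := by
    rcases hc i hi with h1 | h1 <;> rcases hd i hi with h2 | h2 <;>
      rcases gap (i + 1) with h3 | h3 <;> omega
  rcases hg with hg | hg
  · exact keyAux n c d x (hd15 d hd) hxc1 hxd2 i hi hg hagree
  · exact keyAux n d c x (hd15 c hc) hxd1 hxc2 i hi hg
      (fun j hj => (hagree j hj).symm)

lemma summable_digits (c : ℕ → ℕ) (h15 : ∀ j, c (j + 1) ≤ 15) :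
    Summable (fun j : ℕ => (c (j + 1) : ℝ) / 16 ^ (j + 1)) := by
  apply Summable.of_nonneg_of_le (fun j => by positivity) (fun j => ?_)
    ((summable_geometric_of_lt_one (by norm_num) (by norm_num : (1/16:ℝ) < 1)).mul_left 15)
  have h1 : (c (j + 1) : ℝ) ≤ 15 := by exact_mod_cast h15 j
  have h2 : ((1 : ℝ) / 16) ^ j = 1 / 16 ^ j := by rw [div_pow, one_pow]
  rw [h2, mul_one_div]
  calc (c (j + 1) : ℝ) / 16 ^ (j + 1) ≤ 15 / 16 ^ (j + 1) := by gcongr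
    _ ≤ 15 / 16 ^ j := by
        have hp : (16 : ℝ) ^ j ≤ 16 ^ (j + 1) :=
          pow_le_pow_right₀ (by norm_num) (by omega)
        exact div_le_div_of_nonneg_left (by norm_num) (by positivity) hp

lemma tail_le (c : ℕ → ℕ) (h15 : ∀ j, c (j + 1) ≤ 15) (n : ℕ) :
    ∑' j : ℕ, (c (j + n + 1) : ℝ) / 16 ^ (j + n + 1) ≤ 1 / 16 ^ n := by
  have hg : Summable (fun j : ℕ => (15 * ((1:ℝ) / 16) ^ (n + 1)) * ((1:ℝ) / 16) ^ j) :=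
    (summable_geometric_of_lt_one (by norm_num) (by norm_num : (1/16:ℝ) < 1)).mul_left _
  have hsum : Summable (fun j : ℕ => (c (j + n + 1) : ℝ) / 16 ^ (j + n + 1)) :=
    (summable_nat_add_iff (f := fun j : ℕ => (c (j + 1) : ℝ) / 16 ^ (j + 1)) n).2
      (summable_digits c h15)
  have hle : ∀ j : ℕ, (c (j + n + 1) : ℝ) / 16 ^ (j + n + 1)
      ≤ (15 * ((1:ℝ) / 16) ^ (n + 1)) * ((1:ℝ) / 16) ^ j := by
    intro j
    have h1 : (c (j + n + 1) : ℝ) ≤ 15 := by exact_mod_cast h15 (j + n)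
    have h2 : (15 * ((1:ℝ) / 16) ^ (n + 1)) * ((1:ℝ) / 16) ^ j = 15 / 16 ^ (j + n + 1) := by
      rw [mul_assoc, ← pow_add, div_pow, one_pow, mul_one_div,
        show n + 1 + j = j + n + 1 by omega]
    rw [h2]; gcongr
  calc ∑' j : ℕ, (c (j + n + 1) : ℝ) / 16 ^ (j + n + 1)
      ≤ ∑' j : ℕ, (15 * ((1:ℝ) / 16) ^ (n + 1)) * ((1:ℝ) / 16) ^ j :=
        Summable.tsum_le_tsum hle hsum hg
    _ = (15 * ((1:ℝ) / 16) ^ (n + 1)) * (1 - 1 / 16)⁻¹ := by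
        rw [tsum_mul_left, tsum_geometric_of_lt_one (by norm_num) (by norm_num)]
    _ = 1 / 16 ^ n := by
        rw [div_pow, one_pow, pow_succ]
        field_simp
        ring

lemma zpow16 (n : ℕ) : (16 : ℝ) ^ (-(n : ℤ)) = 1 / 16 ^ n := by
  rw [zpow_neg, zpow_natCast, one_div]

lemma mem_F_iff (n : ℕ) (x : ℝ) :
    x ∈ F n ↔ ∃ c : ℕ → ℕ, (∀ j, j < n → (c j = pa (j + 1) ∨ c j = pb (j + 1))) ∧
      pS c n ≤ x ∧ x ≤ pS c n + 1 / 16 ^ n := by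
  simp only [F, Set.mem_iUnion, Set.mem_setOf_eq, Set.mem_Icc, exists_prop, zpow16]
  constructor
  · rintro ⟨σ, hσ, hx1, hx2⟩
    refine ⟨fun j => if h : j < n then σ ⟨j, h⟩ else 0, ?_, ?_, ?_⟩
    · intro j hj
      simpa [hj] using hσ ⟨j, hj⟩
    all_goals {
      have hl : lEnd σ = pS (fun j => if h : j < n then σ ⟨j, h⟩ else 0) n := by
        unfold lEnd pS
        rw [← Fin.sum_univ_eq_sum_range (fun j => ((if h : j < n then σ ⟨j, h⟩ else 0 : ℕ) : ℝ) / 16 ^ (j + 1)) n]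
        exact Finset.sum_congr rfl (fun i _ => by simp [i.2])
      first
        | linarith [hl ▸ hx1]
        | linarith [hl ▸ hx2] }
  · rintro ⟨c, hc, hx1, hx2⟩
    refine ⟨fun i => c i.1, fun i => hc i.1 i.2, ?_, ?_⟩
    all_goals {
      have hl : lEnd (fun i : Fin n => c i.1) = pS c n := by
        unfold lEnd pS
        exact Fin.sum_univ_eq_sum_range (fun j => ((c j : ℝ)) / 16 ^ (j + 1)) n
      first | linarith | linarith }

/-- A number `x ∈ [0,1]` belongs to `P_F` iff it admits a hexadecimal expansion
`x = Σ_{n≥1} c_n 16^(-n)` with `c_n ∈ {pa n, pb n}` for every `n ≥ 1`. -/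
theorem stmt8 : ∀ x ∈ Set.Icc (0 : ℝ) 1,
    x ∈ PF ↔ ∃ c : ℕ → ℕ, (∀ n : ℕ, 1 ≤ n → c n = pa n ∨ c n = pb n) ∧
      x = ∑' n : ℕ, (c (n + 1) : ℝ) / 16 ^ (n + 1) := by
  intro x _
  constructor
  · intro hx
    have H : ∀ n, ∃ c : ℕ → ℕ, (∀ j, j < n → (c j = pa (j + 1) ∨ c j = pb (j + 1))) ∧
        pS c n ≤ x ∧ x ≤ pS c n + 1 / 16 ^ n :=
      fun n => (mem_F_iff n x).1 (Set.mem_iInter.1 hx n)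
    choose e he1 he2 he3 using H
    have comp : ∀ m n, m ≤ n → ∀ j, j < m → e n j = e m j := by
      intro m n hmn
      have hb1 : pS (e n) m ≤ x := le_trans (pS_mono _ hmn) (he2 n)
      have hb2 : x ≤ pS (e n) m + 1 / 16 ^ m := by
        have h1 := he3 n
        have h2 := pS_split (e n) hmn
        have h3 := sum_Ico_le (e n) m n hmn (fun j _ hj' => by
          have := pa_lt (j + 1); have := pb_lt (j + 1)
          rcases he1 n j hj' with h | h <;> omega)
        linarith
      exact key m (e n) (e m) x (fun j hj => he1 n j (by omega)) (he1 m)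
        hb1 hb2 (he2 m) (he3 m)
    set c : ℕ → ℕ := fun j => e j (j - 1) with hcdef
    have hcj : ∀ n j, j < n → e n j = c (j + 1) := by
      intro n j hj
      rw [comp (j + 1) n (by omega) j (by omega)]
      simp [hcdef]
    have hdig : ∀ m, 1 ≤ m → c m = pa m ∨ c m = pb m := by
      intro m hm
      cases m with
      | zero => omega
      | succ j =>
        rw [← hcj (j + 1) j (by omega)]
        exact he1 (j + 1) j (by omega)
    have h15 : ∀ j, c (j + 1) ≤ 15 := fun j => by
      have := pa_lt (j + 1); have := pb_lt (j + 1)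
      rcases hdig (j + 1) (by omega) with h | h <;> omega
    have hsum := summable_digits c h15
    refine ⟨c, hdig, ?_⟩
    have hpS : ∀ n, pS (e n) n = ∑ j ∈ Finset.range n, (c (j + 1) : ℝ) / 16 ^ (j + 1) :=
      fun n => Finset.sum_congr rfl (fun j hj => by rw [hcj n j (Finset.mem_range.1 hj)])
    have htend1 : Tendsto (fun n => ∑ j ∈ Finset.range n, (c (j + 1) : ℝ) / 16 ^ (j + 1))
        atTop (𝓝 (∑' j : ℕ, (c (j + 1) : ℝ) / 16 ^ (j + 1))) :=
      hsum.hasSum.tendsto_sum_nat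
    have htend0 : Tendsto (fun n : ℕ => ((1 : ℝ) / 16) ^ n) atTop (𝓝 0) :=
      tendsto_pow_atTop_nhds_zero_of_lt_one (by norm_num) (by norm_num)
    have htend2 : Tendsto (fun n => ∑ j ∈ Finset.range n, (c (j + 1) : ℝ) / 16 ^ (j + 1))
        atTop (𝓝 x) := by
      apply tendsto_of_tendsto_of_tendsto_of_le_of_le
        (g := fun n : ℕ => x - ((1 : ℝ) / 16) ^ n) (h := fun _ : ℕ => x)
      · simpa using tendsto_const_nhds.sub htend0
      · exact tendsto_const_nhds
      · intro n
        have h1 := he3 n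
        have h2 : ((1 : ℝ) / 16) ^ n = 1 / 16 ^ n := by rw [div_pow, one_pow]
        show x - ((1 : ℝ) / 16) ^ n ≤ ∑ j ∈ Finset.range n, (c (j + 1) : ℝ) / 16 ^ (j + 1)
        rw [← hpS n, h2]; linarith
      · intro n
        have h1 := he2 n
        show ∑ j ∈ Finset.range n, (c (j + 1) : ℝ) / 16 ^ (j + 1) ≤ x
        rw [← hpS n]; linarith
    exact tendsto_nhds_unique htend2 htend1
  · rintro ⟨c, hdig, rfl⟩
    have h15 : ∀ j, c (j + 1) ≤ 15 := fun j => by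
      have := pa_lt (j + 1); have := pb_lt (j + 1)
      rcases hdig (j + 1) (by omega) with h | h <;> omega
    have hsum := summable_digits c h15
    apply Set.mem_iInter.2
    intro n
    apply (mem_F_iff n _).2
    refine ⟨fun j => c (j + 1), fun j hj => hdig (j + 1) (by omega), ?_, ?_⟩
    all_goals {
      have hsplit : ∑' j : ℕ, (c (j + 1) : ℝ) / 16 ^ (j + 1) =
          pS (fun j => c (j + 1)) n + ∑' j : ℕ, (c (j + n + 1) : ℝ) / 16 ^ (j + n + 1) := by
        have := (Summable.sum_add_tsum_nat_add (f := fun j : ℕ => (c (j + 1) : ℝ) / 16 ^ (j + 1)) n hsum).symm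
        exact this
      have h1 : (0 : ℝ) ≤ ∑' j : ℕ, (c (j + n + 1) : ℝ) / 16 ^ (j + n + 1) :=
        tsum_nonneg (fun j => by positivity)
      have h2 := tail_le c h15 n
      rw [hsplit]
      linarith }
end

section
/- For ε_n = 16^(-n), the minimal number of closed intervals of length ε_n needed to cover P_F equals exactly 2^n. -/
open MeasureTheory Set Filter

/-- The minimal number of closed intervals of length `ε` needed to cover `s`. -/
noncomputable def coverNum (s : Set ℝ) (ε : ℝ) : ℕ :=
  sInf {k : ℕ | ∃ t : Finset ℝ, t.card = k ∧ s ⊆ ⋃ x ∈ t, Set.Icc x (x + ε)}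

/-! ### Auxiliary lemmas -/

lemma pa_le (k : ℕ) : pa k ≤ 15 := by unfold pa; omega
lemma pb_le (k : ℕ) : pb k ≤ 15 := by unfold pb; omega
lemma pa_pb (k : ℕ) : pa k + 8 = pb k ∨ pb k + 8 = pa k := by unfold pb pa; omega
lemma pa_ne_pb (k : ℕ) : pa k ≠ pb k := by have := pa_pb k; omega

lemma geo_tsum (m : ℕ) : ∑' j : ℕ, (15:ℝ)/16^(j+m+1) = ((16:ℝ)^m)⁻¹ := by
  have h : ∀ j : ℕ, (15:ℝ)/16^(j+m+1) = (15/16^(m+1)) * (1/16)^j := by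
    intro j
    rw [pow_add, pow_add]
    field_simp
    have h1 : (1/16:ℝ)^j * 16^j = 1 := by rw [← mul_pow]; norm_num
    linear_combination (-((16:ℝ)^m*16)) * h1
  rw [tsum_congr h, tsum_mul_left, tsum_geometric_of_lt_one (by norm_num) (by norm_num)]
  rw [pow_succ]
  have : (16:ℝ)^m ≠ 0 := by positivity
  field_simp
  ring

lemma step_eq (b : ℕ) : (15:ℝ)/16^(b+1) = ((16:ℝ)^b)⁻¹ - ((16:ℝ)^(b+1))⁻¹ := by
  have h : (16:ℝ)^b ≠ 0 := by positivity
  rw [pow_succ]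
  field_simp
  ring

lemma geo_sum {a b : ℕ} (h : a ≤ b) :
    ∑ j ∈ Finset.Ico a b, (15:ℝ)/16^(j+1) = ((16:ℝ)^a)⁻¹ - ((16:ℝ)^b)⁻¹ := by
  induction b, h using Nat.le_induction with
  | base => simp
  | succ b hab ih =>
    rw [Finset.sum_Ico_succ_top hab, ih, step_eq b]
    ring

lemma dig_le {d : ℕ → ℕ} (hd : ∀ j, d j ≤ 15) (j : ℕ) :
    (d j : ℝ)/16^(j+1) ≤ (15:ℝ)/16^(j+1) := by
  gcongr
  exact_mod_cast hd j

lemma summable_geo15 : Summable (fun j : ℕ => (15:ℝ)/16^(j+1)) := by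
  have h : ∀ j : ℕ, (15:ℝ)/16^(j+1) = (15/16) * (1/16)^j := by
    intro j
    rw [pow_succ']
    field_simp
    rw [← mul_pow]; norm_num
  rw [funext h]
  exact (summable_geometric_of_lt_one (by norm_num) (by norm_num)).mul_left _

lemma summable_dig {d : ℕ → ℕ} (hd : ∀ j, d j ≤ 15) :
    Summable (fun j => (d j : ℝ)/16^(j+1)) :=
  Summable.of_nonneg_of_le (fun j => by positivity) (dig_le hd) summable_geo15

lemma tail_bounds {d : ℕ → ℕ} (hd : ∀ j, d j ≤ 15) (m : ℕ) :
    ∑ j ∈ Finset.range m, (d j : ℝ)/16^(j+1) ≤ ∑' j, (d j : ℝ)/16^(j+1) ∧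
    ∑' j, (d j : ℝ)/16^(j+1) ≤ (∑ j ∈ Finset.range m, (d j : ℝ)/16^(j+1)) + ((16:ℝ)^m)⁻¹ := by
  have hs := summable_dig hd
  have hsplit := (hs.sum_add_tsum_nat_add (f := fun j => (d j : ℝ)/16^(j+1)) m).symm
  have hs1 : Summable (fun j : ℕ => (d (j+m) : ℝ)/16^(j+m+1)) :=
    (summable_nat_add_iff (f := fun j => (d j : ℝ)/16^(j+1)) m).2 hs
  have hs2 : Summable (fun j : ℕ => (15:ℝ)/16^(j+m+1)) :=
    (summable_nat_add_iff (f := fun j : ℕ => (15:ℝ)/16^(j+1)) m).2 summable_geo15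
  have htail0 : 0 ≤ ∑' j, (d (j+m) : ℝ)/16^(j+m+1) :=
    tsum_nonneg (fun j => by positivity)
  have htail1 : ∑' j, (d (j+m) : ℝ)/16^(j+m+1) ≤ ((16:ℝ)^m)⁻¹ := by
    rw [← geo_tsum m]
    exact Summable.tsum_le_tsum (fun j => dig_le hd (j+m)) hs1 hs2
  constructor
  · rw [hsplit]; linarith
  · rw [hsplit]; linarith

/-- Admissibility of a digit word. -/
def adm {n : ℕ} (σ : Fin n → ℕ) : Prop :=
  ∀ i : Fin n, σ i = pa (i.1 + 1) ∨ σ i = pb (i.1 + 1)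

/-- Extend a finite digit word to an infinite one, by `pa` digits. -/
noncomputable def extSeq {n : ℕ} (σ : Fin n → ℕ) : ℕ → ℕ :=
  fun j => if h : j < n then σ ⟨j, h⟩ else pa (j + 1)

lemma extSeq_adm {n} {σ : Fin n → ℕ} (h : adm σ) (j : ℕ) :
    extSeq σ j = pa (j+1) ∨ extSeq σ j = pb (j+1) := by
  unfold extSeq
  split
  · exact h ⟨j, by assumption⟩
  · exact Or.inl rfl

lemma extSeq_le {n} {σ : Fin n → ℕ} (h : adm σ) (j : ℕ) : extSeq σ j ≤ 15 := by
  rcases extSeq_adm h j with h' | h' <;> rw [h']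
  · exact pa_le _
  · exact pb_le _

/-- A chosen point of `PF` inside the basic interval of `σ`. -/
noncomputable def pt {n : ℕ} (σ : Fin n → ℕ) : ℝ :=
  ∑' j, (extSeq σ j : ℝ) / 16 ^ (j + 1)

lemma eps_eq (n : ℕ) : (16 : ℝ) ^ (-(n : ℤ)) = ((16:ℝ)^n)⁻¹ := by
  rw [zpow_neg, zpow_natCast]

lemma lEnd_eq_range {m : ℕ} (d : ℕ → ℕ) :
    lEnd (fun i : Fin m => d i.1) = ∑ j ∈ Finset.range m, (d j : ℝ)/16^(j+1) := by
  rw [lEnd, Fin.sum_univ_eq_sum_range (fun j => (d j : ℝ)/16^(j+1)) m]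

lemma pt_mem_PF {n : ℕ} {σ : Fin n → ℕ} (h : adm σ) : pt σ ∈ PF := by
  rw [PF, Set.mem_iInter]
  intro m
  rw [F]
  have hmem : (fun i : Fin m => extSeq σ i.1) ∈
      {τ : Fin m → ℕ | ∀ i : Fin m, τ i = pa (i.1+1) ∨ τ i = pb (i.1+1)} :=
    fun i => extSeq_adm h i.1
  refine Set.mem_biUnion hmem ?_
  have hb := tail_bounds (extSeq_le h) m
  rw [lEnd_eq_range (extSeq σ), eps_eq]
  exact ⟨hb.1, hb.2⟩

lemma pt_bounds {n : ℕ} {σ : Fin n → ℕ} (h : adm σ) :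
    lEnd σ ≤ pt σ ∧ pt σ ≤ lEnd σ + ((16:ℝ)^n)⁻¹ := by
  have hb := tail_bounds (extSeq_le h) n
  have hl : lEnd σ = ∑ j ∈ Finset.range n, (extSeq σ j : ℝ)/16^(j+1) := by
    rw [← lEnd_eq_range (extSeq σ)]
    congr 1
    funext i
    simp [extSeq, i.2]
  rw [hl]
  exact ⟨hb.1, hb.2⟩

open scoped Classical in
lemma sep {n : ℕ} {σ τ : Fin n → ℕ} (hσ : adm σ) (hτ : adm τ) (hne : σ ≠ τ) :
    ((16:ℝ)^n)⁻¹ < |pt σ - pt τ| := by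
  set d := extSeq σ with hd
  set e := extSeq τ with he
  set f : ℕ → ℝ := fun j => ((d j : ℝ) - (e j : ℝ))/16^(j+1) with hf
  have hex : ∃ j, ∃ h : j < n, σ ⟨j, h⟩ ≠ τ ⟨j, h⟩ := by
    by_contra hc
    push_neg at hc
    exact hne (funext fun i => hc i.1 i.2)
  set i := Nat.find hex with hi
  obtain ⟨hin, hneq⟩ := Nat.find_spec hex
  have hmin : ∀ j, j < i → ∀ h : j < n, σ ⟨j, h⟩ = τ ⟨j, h⟩ := by
    intro j hj h
    have := Nat.find_min hex hj
    push_neg at this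
    exact this h
  have hdiff : pt σ - pt τ = ∑' j, f j := by
    rw [pt, pt, ← Summable.tsum_sub (summable_dig (extSeq_le hσ)) (summable_dig (extSeq_le hτ))]
    exact tsum_congr fun j => div_sub_div_same _ _ _
  have hzero : ∀ j ∉ Finset.range n, f j = 0 := by
    intro j hj
    rw [Finset.mem_range] at hj
    have : d j = e j := by simp [hd, he, extSeq, hj]
    simp [hf, this]
  have htsum : ∑' j, f j = ∑ j ∈ Finset.range n, f j := tsum_eq_sum hzero
  have hzlt : ∀ j, j < i → f j = 0 := by
    intro j hj
    have hjn : j < n := hj.trans hin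
    have : d j = e j := by simp [hd, he, extSeq, hjn, hmin j hj hjn]
    simp [hf, this]
  have hsplit : ∑ j ∈ Finset.range n, f j = f i + ∑ j ∈ Finset.Ico (i+1) n, f j := by
    rw [Finset.range_eq_Ico, ← Finset.sum_Ico_consecutive _ (Nat.zero_le i) hin.le]
    rw [Finset.sum_eq_zero (fun j hj => hzlt j (Finset.mem_Ico.1 hj).2), zero_add]
    exact Finset.sum_eq_sum_Ico_succ_bot hin f
  have hdi : d i + 8 = e i ∨ e i + 8 = d i := by
    have h1 : d i = pa (i+1) ∨ d i = pb (i+1) := extSeq_adm hσ i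
    have h2 : e i = pa (i+1) ∨ e i = pb (i+1) := extSeq_adm hτ i
    have h3 : d i ≠ e i := by
      simp only [hd, he, extSeq, dif_pos hin]
      rw [dif_pos (show i < n from hin), dif_pos (show i < n from hin)]
      exact hneq
    have h4 := pa_pb (i+1)
    omega
  have hfi : |f i| = 8 * ((16:ℝ)^(i+1))⁻¹ := by
    have hp : (0:ℝ) < 16^(i+1) := by positivity
    rcases hdi with h | h
    · have : (e i : ℝ) = (d i : ℝ) + 8 := by exact_mod_cast congrArg (Nat.cast : ℕ → ℝ) h.symm
      rw [hf]
      simp only [this]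
      rw [abs_div, abs_of_pos hp]
      rw [show (d i : ℝ) - ((d i : ℝ) + 8) = -8 by ring]
      rw [abs_neg]
      rw [abs_of_pos (by norm_num : (0:ℝ) < 8)]
      field_simp
    · have : (d i : ℝ) = (e i : ℝ) + 8 := by exact_mod_cast congrArg (Nat.cast : ℕ → ℝ) h.symm
      rw [hf]
      simp only [this]
      rw [abs_div, abs_of_pos hp]
      rw [show (e i : ℝ) + 8 - (e i : ℝ) = 8 by ring]
      rw [abs_of_pos (by norm_num : (0:ℝ) < 8)]
      field_simp
  have hrest : |∑ j ∈ Finset.Ico (i+1) n, f j| ≤ ((16:ℝ)^(i+1))⁻¹ - ((16:ℝ)^n)⁻¹ := by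
    calc |∑ j ∈ Finset.Ico (i+1) n, f j| ≤ ∑ j ∈ Finset.Ico (i+1) n, |f j| :=
          Finset.abs_sum_le_sum_abs _ _
    _ ≤ ∑ j ∈ Finset.Ico (i+1) n, (15:ℝ)/16^(j+1) := by
          apply Finset.sum_le_sum
          intro j _
          rw [hf, abs_div, abs_of_pos (by positivity : (0:ℝ) < 16^(j+1))]
          gcongr
          have hdj : (d j : ℝ) ≤ 15 := by exact_mod_cast extSeq_le hσ j
          have hej : (e j : ℝ) ≤ 15 := by exact_mod_cast extSeq_le hτ j
          have hdj0 : (0:ℝ) ≤ (d j : ℝ) := Nat.cast_nonneg _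
          have hej0 : (0:ℝ) ≤ (e j : ℝ) := Nat.cast_nonneg _
          rw [abs_sub_le_iff]
          constructor <;> linarith
    _ = ((16:ℝ)^(i+1))⁻¹ - ((16:ℝ)^n)⁻¹ := geo_sum hin
  rw [hdiff, htsum, hsplit]
  have h1 : |f i| - |∑ j ∈ Finset.Ico (i+1) n, f j| ≤ |f i + ∑ j ∈ Finset.Ico (i+1) n, f j| := by
    have h2 := abs_sub_abs_le_abs_sub (f i) (-(∑ j ∈ Finset.Ico (i+1) n, f j))
    simpa [sub_neg_eq_add] using h2
  have hp : (0:ℝ) < ((16:ℝ)^(i+1))⁻¹ := by positivity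
  linarith

/-- Digit words coded by boolean sequences. -/
noncomputable def sigB {n : ℕ} (b : Fin n → Bool) : Fin n → ℕ :=
  fun i => if b i then pa (i.1 + 1) else pb (i.1 + 1)

lemma sigB_adm {n : ℕ} (b : Fin n → Bool) : adm (sigB b) := by
  intro i
  unfold sigB
  split
  · exact Or.inl rfl
  · exact Or.inr rfl

lemma sigB_inj {n : ℕ} : Function.Injective (sigB (n := n)) := by
  intro b b' h
  funext i
  have hi := congrFun h i
  unfold sigB at hi
  cases hb : b i <;> cases hb' : b' i <;> rw [hb, hb'] at hi <;>
    simp at hi ⊢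
  · exact absurd hi.symm (pa_ne_pb _)
  · exact absurd hi (pa_ne_pb _)

/-- For `ε_n = 16^(-n)`, the minimal number of closed intervals of length `ε_n`
needed to cover `P_F` equals exactly `2^n`. -/
theorem stmt10 : ∀ n : ℕ, coverNum PF ((16 : ℝ) ^ (-(n : ℤ))) = 2 ^ n := by
  intro n
  have hcard : Fintype.card (Fin n → Bool) = 2 ^ n := by simp
  set ε : ℝ := (16 : ℝ) ^ (-(n : ℤ)) with hε
  have hεe : ε = ((16:ℝ)^n)⁻¹ := eps_eq n
  set t : Finset ℝ := Finset.image (fun b : Fin n → Bool => lEnd (sigB b)) Finset.univ with ht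
  have hcover : PF ⊆ ⋃ x ∈ t, Set.Icc x (x + ε) := by
    intro y hy
    have hyn : y ∈ F n := Set.mem_iInter.1 hy n
    rw [F] at hyn
    rw [Set.mem_iUnion₂] at hyn
    obtain ⟨σ, hσ, hyσ⟩ := hyn
    have hσa : adm σ := hσ
    classical
    have hrep : sigB (fun i => decide (σ i = pa (i.1+1))) = σ := by
      funext i
      by_cases h : σ i = pa (i.1+1)
      · simp [sigB, h]
      · have h2 : σ i = pb (i.1+1) := (hσa i).resolve_left h
        simp only [sigB, decide_eq_false h]
        simpa using h2.symm
    apply Set.mem_biUnion (show lEnd σ ∈ (t : Set ℝ) from ?_) hyσ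
    rw [ht]
    push_cast
    simp only [Finset.coe_image, Set.mem_image]
    exact ⟨_, by simp, by rw [hrep]⟩
  have hmem : t.card ∈ {k : ℕ | ∃ t : Finset ℝ, t.card = k ∧ PF ⊆ ⋃ x ∈ t, Set.Icc x (x + ε)} :=
    ⟨t, rfl, hcover⟩
  have hub : coverNum PF ε ≤ 2 ^ n := by
    refine le_trans (Nat.sInf_le hmem) ?_
    calc t.card ≤ (Finset.univ : Finset (Fin n → Bool)).card := Finset.card_image_le
    _ = 2 ^ n := by rw [Finset.card_univ, hcard]
  have hlb : 2 ^ n ≤ coverNum PF ε := by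
    apply le_csInf ⟨t.card, hmem⟩
    rintro k ⟨u, rfl, hcov⟩
    have hch : ∀ b : Fin n → Bool, ∃ c, c ∈ u ∧ pt (sigB b) ∈ Set.Icc c (c + ε) := by
      intro b
      have := hcov (pt_mem_PF (sigB_adm b))
      rw [Set.mem_iUnion₂] at this
      obtain ⟨c, hc, h⟩ := this
      exact ⟨c, hc, h⟩
    choose g hg1 hg2 using hch
    have hinj : Set.InjOn g (Finset.univ : Finset (Fin n → Bool)) := by
      intro b _ b' _ hgb
      by_contra hne
      have hσne : sigB b ≠ sigB b' := fun h => hne (sigB_inj h)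
      have hsep := sep (sigB_adm b) (sigB_adm b') hσne
      have h1 := hg2 b
      have h2 := hg2 b'
      rw [hgb] at h1
      rw [Set.mem_Icc] at h1 h2
      rw [hεe] at h1 h2
      have : |pt (sigB b) - pt (sigB b')| ≤ ((16:ℝ)^n)⁻¹ := by
        rw [abs_sub_le_iff]
        constructor <;> linarith [h1.1, h1.2, h2.1, h2.2]
      linarith
    calc (2:ℕ) ^ n = (Finset.univ : Finset (Fin n → Bool)).card := by
          rw [Finset.card_univ, hcard]
    _ ≤ u.card := Finset.card_le_card_of_injOn g (fun b _ => hg1 b) hinj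
  omega
end
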